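/- Let E, H₁, H₂ be complex Hilbert spaces and let A ∈ B(E), B₁ ∈ B(H₁, E), B₂ ∈ B(H₂, E), C₁ ∈ B(E, H₁), C₂ ∈ B(E, H₂), D₁ ∈ B(H₁), D₂ ∈ B(H₂, H₁), D₃ ∈ B(H₂), A₁, A₂ ∈ B(E), X₁ ∈ B(E, H₁), Y₂ ∈ B(H₂, E). Suppose the operator U on E ⊕ H₁ ⊕ H₂ defined by U(e, h₁, h₂) = (A e + B₁ h₁ + B₂ h₂, C₁ e + D₁ h₁ + D₂ h₂, C₂ e + D₃ h₂) is an isometry, and that A = A₁ A₂, B₂ = A₁ Y₂, C₁ = X₁ A₂, D₂ = X₁ Y₂, and A₁*A₁ + X₁*X₁ = I_E. Then the operator U₂ on E ⊕ H₂ defined by U₂(e, h₂) = (A₂ e + Y₂ h₂, C₂ e + D₃ h₂) is an isometry. -/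

import Mathlib

open ContinuousLinearMap

/-- The element `(x, y)` of the Hilbert-space direct sum `X ⊕ Y`,
modelled as `WithLp 2 (X × Y)`. -/
noncomputable def mk2 {X Y : Type*} (x : X) (y : Y) : WithLp 2 (X × Y) :=
  (WithLp.equiv 2 (X × Y)).symm (x, y)

/-- The element `(e, h₁, h₂)` of the Hilbert-space direct sum `E ⊕ H₁ ⊕ H₂`,
modelled as `WithLp 2 (E × WithLp 2 (H₁ × H₂))`. -/
noncomputable def mk3 {E H₁ H₂ : Type*} (e : E) (h₁ : H₁) (h₂ : H₂) :
    WithLp 2 (E × WithLp 2 (H₁ × H₂)) :=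
  (WithLp.equiv 2 _).symm (e, (WithLp.equiv 2 (H₁ × H₂)).symm (h₁, h₂))

/-- Suppose
`U(e, h₁, h₂) = (A e + B₁ h₁ + B₂ h₂, C₁ e + D₁ h₁ + D₂ h₂, C₂ e + D₃ h₂)` is an
isometry, `A = A₁ A₂`, `B₂ = A₁ Y₂`, `C₁ = X₁ A₂`, `D₂ = X₁ Y₂` and
`A₁*A₁ + X₁*X₁ = I`.  Then `U₂(e, h₂) = (A₂ e + Y₂ h₂, C₂ e + D₃ h₂)` is an
isometry on `E ⊕ H₂`. -/
theorem statement11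
    {E H₁ H₂ : Type*}
    [NormedAddCommGroup E] [InnerProductSpace ℂ E] [CompleteSpace E]
    [NormedAddCommGroup H₁] [InnerProductSpace ℂ H₁] [CompleteSpace H₁]
    [NormedAddCommGroup H₂] [InnerProductSpace ℂ H₂] [CompleteSpace H₂]
    (A : E →L[ℂ] E) (B₁ : H₁ →L[ℂ] E) (B₂ : H₂ →L[ℂ] E)
    (C₁ : E →L[ℂ] H₁) (C₂ : E →L[ℂ] H₂)
    (D₁ : H₁ →L[ℂ] H₁) (D₂ : H₂ →L[ℂ] H₁) (D₃ : H₂ →L[ℂ] H₂)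
    (A₁ A₂ : E →L[ℂ] E) (X₁ : E →L[ℂ] H₁) (Y₂ : H₂ →L[ℂ] E)
    (U : WithLp 2 (E × WithLp 2 (H₁ × H₂)) →L[ℂ] WithLp 2 (E × WithLp 2 (H₁ × H₂)))
    (hU : ∀ (e : E) (h₁ : H₁) (h₂ : H₂),
      U (mk3 e h₁ h₂) =
        mk3 (A e + B₁ h₁ + B₂ h₂) (C₁ e + D₁ h₁ + D₂ h₂) (C₂ e + D₃ h₂))
    (hIso : Isometry U)
    (hA : A = A₁ ∘L A₂) (hB₂ : B₂ = A₁ ∘L Y₂)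
    (hC₁ : C₁ = X₁ ∘L A₂) (hD₂ : D₂ = X₁ ∘L Y₂)
    (hA₁X₁ : adjoint A₁ ∘L A₁ + adjoint X₁ ∘L X₁ = ContinuousLinearMap.id ℂ E)
    (U₂ : WithLp 2 (E × H₂) →L[ℂ] WithLp 2 (E × H₂))
    (hU₂ : ∀ (e : E) (h₂ : H₂), U₂ (mk2 e h₂) = mk2 (A₂ e + Y₂ h₂) (C₂ e + D₃ h₂)) :
    Isometry U₂ := by
  have key : ∀ v : E, ‖A₁ v‖ ^ 2 + ‖X₁ v‖ ^ 2 = ‖v‖ ^ 2 := by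
    intro v
    have h := congrArg (fun T : E →L[ℂ] E => (inner ℂ (T v) v : ℂ)) hA₁X₁
    simp only [ContinuousLinearMap.add_apply, ContinuousLinearMap.coe_id',
      ContinuousLinearMap.comp_apply, id_eq, inner_add_left,
      ContinuousLinearMap.adjoint_inner_left] at h
    rw [inner_self_eq_norm_sq_to_K, inner_self_eq_norm_sq_to_K,
      inner_self_eq_norm_sq_to_K] at h
    exact_mod_cast h
  have hmk2 : ∀ x : WithLp 2 (E × H₂), x = mk2 x.fst x.snd := fun x => rfl
  have hnorm3 : ∀ (e : E) (h₁ : H₁) (h₂ : H₂),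
      ‖mk3 e h₁ h₂‖ ^ 2 = ‖e‖ ^ 2 + ‖h₁‖ ^ 2 + ‖h₂‖ ^ 2 := by
    intro e h₁ h₂
    rw [mk3, WithLp.prod_norm_sq_eq_of_L2, WithLp.equiv_symm_apply, WithLp.toLp_fst, WithLp.toLp_snd,
      WithLp.prod_norm_sq_eq_of_L2, WithLp.equiv_symm_apply, WithLp.toLp_fst, WithLp.toLp_snd]
    ring
  have hnorm2 : ∀ (e : E) (h₂ : H₂), ‖mk2 e h₂‖ ^ 2 = ‖e‖ ^ 2 + ‖h₂‖ ^ 2 := by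
    intro e h₂
    rw [mk2, WithLp.prod_norm_sq_eq_of_L2, WithLp.equiv_symm_apply, WithLp.toLp_fst, WithLp.toLp_snd]
  apply AddMonoidHomClass.isometry_of_norm
  intro x
  rw [hmk2 x, hU₂]
  have hsq : ‖mk2 (A₂ x.fst + Y₂ x.snd) (C₂ x.fst + D₃ x.snd)‖ ^ 2 = ‖mk2 x.fst x.snd‖ ^ 2 := by
    have hUiso := hIso.norm_map_of_map_zero (by simp) (mk3 x.fst 0 x.snd)
    rw [hU x.fst 0 x.snd] at hUiso
    have := congrArg (fun r : ℝ => r ^ 2) hUiso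
    rw [hnorm3, hnorm3] at this
    simp only [map_zero, add_zero, norm_zero] at this
    rw [hA, hB₂, hC₁, hD₂] at this
    simp only [ContinuousLinearMap.comp_apply] at this
    rw [← map_add A₁, ← map_add X₁] at this
    rw [hnorm2, hnorm2]
    have hk := key (A₂ x.fst + Y₂ x.snd)
    linarith [this, hk]
  have h1 := norm_nonneg (mk2 (A₂ x.fst + Y₂ x.snd) (C₂ x.fst + D₃ x.snd))
  have h2 := norm_nonneg (mk2 x.fst x.snd)
  rw [← Real.sqrt_sq h1, ← Real.sqrt_sq h2, hsq]
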